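/- Let M, G be 4×4 real matrices with M = GᵀG and det G > 0, and let a, b, c, d, e, f ∈ ℝ⁴. Then InHypersphere(G·a, G·b, G·c, G·d, G·e, G·f) = √(det M) · [ (a−f)ᵀM(a−f)·det D₁ − (b−f)ᵀM(b−f)·det D₂ + (c−f)ᵀM(c−f)·det D₃ − (d−f)ᵀM(d−f)·det D₄ + (e−f)ᵀM(e−f)·det D₅ ], where Dₖ is the 4×4 matrix whose rows are the transposed difference vectors (x−f)ᵀ for x ranging over (a,b,c,d,e) with the k-th point omitted, in order. That is, the metric-weighted in-hypersphere predicate InHypersphere_M can be computed directly from M without factorizing M, and agrees with the standard in-hypersphere predicate applied to the scaled points. -/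

import Mathlib

open Matrix

/-- The standard in-hypersphere predicate of points `a, b, c, d, e, f ∈ ℝ⁴`: the
determinant of the 5×5 matrix whose rows are `[(x−f)ᵀ, (x−f)ᵀ(x−f)]` for
`x = a, b, c, d, e`. -/
noncomputable def inHypersphere (a b c d e f : Fin 4 → ℝ) : ℝ :=
  (Matrix.of fun (i : Fin 5) =>
    Fin.snoc ((![a, b, c, d, e]) i - f)
      ((((![a, b, c, d, e]) i - f) ⬝ᵥ ((![a, b, c, d, e]) i - f)) : ℝ)).det

/-- The metric-weighted in-hypersphere predicate in 4D: with `M = GᵀG`, `det G > 0`, the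
standard in-hypersphere predicate applied to the scaled points `G·a, …, G·f` equals
`√(det M)` times the alternating sum `Σ ± (x−f)ᵀM(x−f)·det Dₖ`, computed directly from
`M` without factorizing it. -/
theorem inHypersphere_metric_weighted (M G : Matrix (Fin 4) (Fin 4) ℝ)
    (hM : M = Gᵀ * G) (hG : 0 < G.det) (a b c d e f : Fin 4 → ℝ) :
    inHypersphere (G.mulVec a) (G.mulVec b) (G.mulVec c) (G.mulVec d) (G.mulVec e)
        (G.mulVec f) =
      Real.sqrt M.det *
        (((a - f) ⬝ᵥ M.mulVec (a - f)) *
            (Matrix.of ![b - f, c - f, d - f, e - f]).det -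
          ((b - f) ⬝ᵥ M.mulVec (b - f)) *
            (Matrix.of ![a - f, c - f, d - f, e - f]).det +
          ((c - f) ⬝ᵥ M.mulVec (c - f)) *
            (Matrix.of ![a - f, b - f, d - f, e - f]).det -
          ((d - f) ⬝ᵥ M.mulVec (d - f)) *
            (Matrix.of ![a - f, b - f, c - f, e - f]).det +
          ((e - f) ⬝ᵥ M.mulVec (e - f)) *
            (Matrix.of ![a - f, b - f, c - f, d - f]).det) := by
  have hdetM : M.det = G.det ^ 2 := by
    rw [hM, Matrix.det_mul, Matrix.det_transpose, sq]
  have hsqrt : Real.sqrt M.det = G.det := by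
    rw [hdetM, Real.sqrt_sq hG.le]
  have hq : ∀ v : Fin 4 → ℝ, (G.mulVec v) ⬝ᵥ (G.mulVec v) = v ⬝ᵥ M.mulVec v := by
    intro v
    rw [hM, ← Matrix.mulVec_mulVec, Matrix.dotProduct_mulVec v, Matrix.vecMul_transpose]
  have hrow : ∀ w : Fin 4 → Fin 4 → ℝ,
      (Matrix.of fun k => G.mulVec (w k)).det = (Matrix.of w).det * G.det := by
    intro w
    have h : (Matrix.of fun k => G.mulVec (w k)) = Matrix.of w * Gᵀ := by
      ext k j
      simp [Matrix.mul_apply, Matrix.mulVec, dotProduct, mul_comm]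
    rw [h, Matrix.det_mul, Matrix.det_transpose]
  set u : Fin 5 → Fin 4 → ℝ := fun i => ![a, b, c, d, e] i - f with hu
  have h1 : inHypersphere (G.mulVec a) (G.mulVec b) (G.mulVec c) (G.mulVec d) (G.mulVec e)
        (G.mulVec f) =
      (Matrix.of fun (i : Fin 5) =>
        Fin.snoc (G.mulVec (u i)) ((u i) ⬝ᵥ M.mulVec (u i))).det := by
    rw [inHypersphere]
    congr 1
    ext i j
    have hdiff : ![G.mulVec a, G.mulVec b, G.mulVec c, G.mulVec d, G.mulVec e] i
        - G.mulVec f = G.mulVec (u i) := by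
      fin_cases i <;> simp [hu, Matrix.mulVec_sub]
    simp only [Matrix.of_apply]
    rw [hdiff, hq]
  have hsub : ∀ i : Fin 5,
      ((Matrix.of fun (i : Fin 5) =>
        Fin.snoc (G.mulVec (u i)) ((u i) ⬝ᵥ M.mulVec (u i))).submatrix i.succAbove
          (Fin.last 4).succAbove).det
      = (Matrix.of fun k => u (i.succAbove k)).det * G.det := by
    intro i
    have h : ((Matrix.of fun (i : Fin 5) =>
        Fin.snoc (G.mulVec (u i)) ((u i) ⬝ᵥ M.mulVec (u i))).submatrix i.succAbove
          (Fin.last 4).succAbove)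
        = Matrix.of fun k => G.mulVec (u (i.succAbove k)) := by
      ext k j
      simp only [Matrix.submatrix_apply, Matrix.of_apply, Fin.succAbove_last, Fin.snoc_castSucc]
    rw [h, hrow]
  have e0 : (Matrix.of fun k => u ((0 : Fin 5).succAbove k))
      = Matrix.of ![b - f, c - f, d - f, e - f] := by
    have hs : (Fin.succAbove (0 : Fin 5)) = ![1, 2, 3, 4] := by funext k; fin_cases k <;> rfl
    ext k j; fin_cases k <;> simp [hu, hs]
  have e1 : (Matrix.of fun k => u ((1 : Fin 5).succAbove k))
      = Matrix.of ![a - f, c - f, d - f, e - f] := by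
    have hs : (Fin.succAbove (1 : Fin 5)) = ![0, 2, 3, 4] := by funext k; fin_cases k <;> rfl
    ext k j; fin_cases k <;> simp [hu, hs]
  have e2 : (Matrix.of fun k => u ((2 : Fin 5).succAbove k))
      = Matrix.of ![a - f, b - f, d - f, e - f] := by
    have hs : (Fin.succAbove (2 : Fin 5)) = ![0, 1, 3, 4] := by funext k; fin_cases k <;> rfl
    ext k j; fin_cases k <;> simp [hu, hs]
  have e3 : (Matrix.of fun k => u ((3 : Fin 5).succAbove k))
      = Matrix.of ![a - f, b - f, c - f, e - f] := by
    have hs : (Fin.succAbove (3 : Fin 5)) = ![0, 1, 2, 4] := by funext k; fin_cases k <;> rfl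
    ext k j; fin_cases k <;> simp [hu, hs]
  have e4 : (Matrix.of fun k => u ((4 : Fin 5).succAbove k))
      = Matrix.of ![a - f, b - f, c - f, d - f] := by
    have hs : (Fin.succAbove (4 : Fin 5)) = ![0, 1, 2, 3] := by funext k; fin_cases k <;> rfl
    ext k j; fin_cases k <;> simp [hu, hs]
  rw [h1, Matrix.det_succ_column _ (Fin.last 4), Fin.sum_univ_five,
    hsub 0, hsub 1, hsub 2, hsub 3, hsub 4, e0, e1, e2, e3, e4, hsqrt]
  have hu0 : u 0 = a - f := by simp [hu]
  have hu1 : u 1 = b - f := by simp [hu]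
  have hu2 : u 2 = c - f := by simp [hu]
  have hu3 : u 3 = d - f := by simp [hu]
  have hu4 : u 4 = e - f := by simp [hu]
  simp only [Matrix.of_apply, Fin.snoc_last, hu0, hu1, hu2, hu3, hu4, Fin.val_last,
    show ((0 : Fin 5) : ℕ) = 0 from rfl, show ((1 : Fin 5) : ℕ) = 1 from rfl,
    show ((2 : Fin 5) : ℕ) = 2 from rfl, show ((3 : Fin 5) : ℕ) = 3 from rfl,
    show ((4 : Fin 5) : ℕ) = 4 from rfl]
  norm_num
  ring
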